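/- Let M be an n×n real symmetric positive definite matrix and let W = M⁻¹. Let α > 0, α_g ≥ 0, ν > 0, and let Ṁ, F be symmetric matrices with F = 2·sym(M·A) for some matrix A, where sym(X) = (X + Xᵀ)/2. Then the inequality Ṁ + 2·sym(M·A) + α_g·I ⪯ −2α·M holds if and only if the block matrix [[−Ẇ' + 2·sym(A·W') + 2α·W', W'], [W', −(ν/α_g)·I]] ⪯ 0, where W' = ν·W and Ẇ' = −ν·W·Ṁ·W (assuming α_g > 0). -/

import Mathlib

open Matrix

private lemma psd_smul {n : ℕ} {A : Matrix (Fin n) (Fin n) ℝ} (hA : A.PosSemidef)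
    {c : ℝ} (hc : 0 ≤ c) : (c • A).PosSemidef := by
  rw [posSemidef_iff_dotProduct_mulVec] at hA ⊢
  constructor
  · show (c • A)ᴴ = c • A
    rw [conjTranspose_smul, hA.1.eq, star_trivial]
  · intro x
    simp only [smul_mulVec, dotProduct_smul, smul_eq_mul]
    exact mul_nonneg hc (hA.2 x)

private lemma pd_smul_one {n : ℕ} {c : ℝ} (hc : 0 < c) :
    ((c • 1 : Matrix (Fin n) (Fin n) ℝ)).PosDef := by
  rw [posDef_iff_dotProduct_mulVec]
  constructor
  · show (c • (1 : Matrix (Fin n) (Fin n) ℝ))ᴴ = _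
    rw [conjTranspose_smul, conjTranspose_one, star_trivial]
  · intro x hx
    simp only [smul_mulVec, one_mulVec, dotProduct_smul, smul_eq_mul]
    exact mul_pos hc (Matrix.dotProduct_star_self_pos_iff.mpr hx)

theorem stmt_3 {n : ℕ} (M W Mdot A : Matrix (Fin n) (Fin n) ℝ)
    (hM : M.PosDef) (hW : W = M⁻¹) (hMdot : Mdot.IsHermitian)
    (α αg ν : ℝ) (hα : 0 < α) (hαg : 0 < αg) (hν : 0 < ν) :
    (-((2 * α) • M) - (Mdot + (M * A + (M * A)ᵀ) + αg • 1)).PosSemidef ↔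
      (-(fromBlocks
          (ν • (W * Mdot * W) + (ν • (A * W) + (ν • (A * W))ᵀ) + ((2 * α) * ν) • W)
          (ν • W) (ν • W) (-((ν / αg) • 1)))).PosSemidef := by
  have hdet : IsUnit M.det := hM.det_pos.ne'.isUnit
  have hWM : W * M = 1 := by rw [hW]; exact nonsing_inv_mul M hdet
  have hMW : M * W = 1 := by rw [hW]; exact mul_nonsing_inv M hdet
  have hMsym : Mᵀ = M := hM.isHermitian
  have hWsym : Wᵀ = W := by rw [hW, transpose_nonsing_inv, hMsym]
  have hWherm : Wᴴ = W := hWsym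
  set S : Matrix (Fin n) (Fin n) ℝ :=
    -((2 * α) • M) - (Mdot + (M * A + (M * A)ᵀ) + αg • 1) with hSdef
  set B11 : Matrix (Fin n) (Fin n) ℝ :=
    ν • (W * Mdot * W) + (ν • (A * W) + (ν • (A * W))ᵀ) + ((2 * α) * ν) • W with hB11
  have hcc : (ν / αg) * (αg / ν) = 1 := by field_simp
  have hcc' : (αg / ν) * (ν / αg) = 1 := by field_simp
  have hmulD : ((ν / αg) • (1 : Matrix (Fin n) (Fin n) ℝ)) * ((αg / ν) • 1) = 1 := by
    rw [smul_mul_smul_comm, one_mul, hcc, one_smul]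
  have hmulD' : ((αg / ν) • (1 : Matrix (Fin n) (Fin n) ℝ)) * ((ν / αg) • 1) = 1 := by
    rw [smul_mul_smul_comm, one_mul, hcc', one_smul]
  haveI : Invertible ((ν / αg) • (1 : Matrix (Fin n) (Fin n) ℝ)) :=
    ⟨(αg / ν) • 1, hmulD', hmulD⟩
  have hD : ((ν / αg) • (1 : Matrix (Fin n) (Fin n) ℝ)).PosDef :=
    pd_smul_one (div_pos hν hαg)
  have hDinv : ((ν / αg) • (1 : Matrix (Fin n) (Fin n) ℝ))⁻¹ = (αg / ν) • 1 :=
    inv_eq_right_inv hmulD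
  have hblock : -(fromBlocks B11 (ν • W) (ν • W) (-((ν / αg) • 1)))
      = fromBlocks (-B11) (-(ν • W)) (-(ν • W))ᴴ ((ν / αg) • 1) := by
    rw [fromBlocks_neg, neg_neg]
    congr 1
    rw [conjTranspose_neg, conjTranspose_smul, star_trivial, hWherm]
  rw [hblock, PosDef.fromBlocks₂₂ _ _ hD, hDinv]
  -- compute the Schur complement
  have e1 : W * ((2 * α) • M) * W = (2 * α) • W := by
    rw [Matrix.mul_smul, Matrix.smul_mul, hWM, one_mul]
  have e2 : W * (M * A) * W = A * W := by
    rw [← Matrix.mul_assoc W M A, hWM, one_mul]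
  have e3 : W * (M * A)ᵀ * W = W * Aᵀ := by
    rw [transpose_mul, hMsym, ← Matrix.mul_assoc W Aᵀ M, Matrix.mul_assoc (W * Aᵀ) M W,
      hMW, mul_one]
  have e4 : W * (αg • (1 : Matrix (Fin n) (Fin n) ℝ)) * W = αg • (W * W) := by
    rw [Matrix.mul_smul, Matrix.mul_one, Matrix.smul_mul]
  have hWSW : W * S * W
      = -((2 * α) • W) - (W * Mdot * W + (A * W + W * Aᵀ) + αg • (W * W)) := by
    rw [hSdef]
    simp only [Matrix.sub_mul, Matrix.mul_sub, Matrix.add_mul, Matrix.mul_add,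
      Matrix.neg_mul, Matrix.mul_neg]
    rw [e1, e2, e3, e4]
  have key : -B11 - -(ν • W) * ((αg / ν) • 1) * (-(ν • W))ᴴ = ν • (W * S * W) := by
    rw [conjTranspose_neg, conjTranspose_smul, star_trivial, hWherm]
    simp only [Matrix.neg_mul, Matrix.mul_neg, neg_neg]
    rw [hWSW]
    rw [smul_mul_smul_comm, smul_mul_smul_comm, Matrix.mul_one]
    rw [hB11, transpose_smul, transpose_mul, hWsym]
    have hsc : ν * (αg / ν) * ν = ν * αg := by field_simp
    rw [hsc]
    module
  rw [key]
  constructor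
  · intro h
    have h2 := h.mul_mul_conjTranspose_same W
    rw [show Wᴴ = W from hWherm] at h2
    exact psd_smul h2 hν.le
  · intro h
    have h2 := h.mul_mul_conjTranspose_same M
    have hMeq : M * (ν • (W * S * W)) * Mᴴ = ν • S := by
      rw [show Mᴴ = M from hMsym, Matrix.mul_smul, Matrix.smul_mul]
      congr 1
      rw [← Matrix.mul_assoc, ← Matrix.mul_assoc, hMW, one_mul,
        Matrix.mul_assoc, hWM, mul_one]
    rw [hMeq] at h2
    have hS' : S = ν⁻¹ • (ν • S) := by
      rw [smul_smul, inv_mul_cancel₀ hν.ne', one_smul]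
    rw [hS']
    exact psd_smul h2 (by positivity)
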